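/- arXiv:2309.04101 — 2 statements merged into one kernel-verified Lean document; each statement's English description precedes it below -/
import Mathlib

section
/- For every n ≥ 5, the adjacency matrix A(Γ1) of the signed graph Γ1 of order n has −1 as an eigenvalue with multiplicity exactly n − 4. -/
open scoped BigOperators

/-- A signed graph on the vertex set `Fin n`: a simple graph together with a
symmetric `±1` sign on each edge. -/
structure SignedGraph (n : ℕ) where
  G : SimpleGraph (Fin n)
  sign : Fin n → Fin n → ℤ
  sign_symm : ∀ i j, sign i j = sign j i
  sign_pm : ∀ i j, G.Adj i j → sign i j = 1 ∨ sign i j = -1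

namespace SignedGraph

variable {n : ℕ}

open Classical in
/-- The adjacency matrix of a signed graph, as a real matrix. -/
noncomputable def adjMatrix (Γ : SignedGraph n) : Matrix (Fin n) (Fin n) ℝ :=
  fun i j => if Γ.G.Adj i j then (Γ.sign i j : ℝ) else 0

/-- The largest eigenvalue (the index) of a signed graph. -/
noncomputable def lambda1 (Γ : SignedGraph n) : ℝ :=
  sSup (spectrum ℝ Γ.adjMatrix)

/-- The sign of an unordered edge. -/
def signEdge (Γ : SignedGraph n) : Sym2 (Fin n) → ℤ :=
  Sym2.lift ⟨Γ.sign, Γ.sign_symm⟩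

/-- The sign of a walk: the product of the signs of its edges. -/
def walkSign (Γ : SignedGraph n) {u v : Fin n} (w : Γ.G.Walk u v) : ℤ :=
  (w.edges.map Γ.signEdge).prod

/-- A negative cycle: a cycle whose sign is `-1`
(equivalently, with an odd number of negative edges). -/
def IsNegCycle (Γ : SignedGraph n) {u : Fin n} (c : Γ.G.Walk u u) : Prop :=
  c.IsCycle ∧ Γ.walkSign c = -1

/-- A signed graph is unbalanced if it contains a negative cycle. -/
def Unbalanced (Γ : SignedGraph n) : Prop :=
  ∃ (u : Fin n) (c : Γ.G.Walk u u), Γ.IsNegCycle c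

/-- A signed graph is negative-`C₄`-free if it contains no negative 4-cycle. -/
def NegC4Free (Γ : SignedGraph n) : Prop :=
  ∀ (u : Fin n) (c : Γ.G.Walk u u), c.IsCycle → c.length = 4 → Γ.walkSign c ≠ -1

end SignedGraph

/-- The signed graph `Γ₁`: vertices `2,…,n-1` induce an all-positive complete
graph, vertices `0` and `1` are joined to each other by a negative edge and to
vertex `2` by positive edges, and have no other neighbours. -/
def Gamma1 (n : ℕ) : SignedGraph n where
  G :=
    { Adj := fun i j => i ≠ j ∧ (2 ≤ min i.val j.val ∨ max i.val j.val ≤ 2)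
      symm := ⟨by
        intro i j h
        refine ⟨Ne.symm h.1, ?_⟩
        rw [min_comm, max_comm]
        exact h.2⟩
      loopless := ⟨by intro i h; exact h.1 rfl⟩ }
  sign := fun i j =>
    if (i.val = 0 ∧ j.val = 1) ∨ (i.val = 1 ∧ j.val = 0) then -1 else 1
  sign_symm := by
    intro i j
    try dsimp only
    by_cases h : (i.val = 0 ∧ j.val = 1) ∨ (i.val = 1 ∧ j.val = 0)
    · rw [if_pos h, if_pos (by tauto)]
    · rw [if_neg h, if_neg (by tauto)]
  sign_pm := by
    intro i j _
    try dsimp only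
    by_cases h : (i.val = 0 ∧ j.val = 1) ∨ (i.val = 1 ∧ j.val = 0)
    · rw [if_pos h]; right; rfl
    · rw [if_neg h]; left; rfl

/-- The signed graph `Γ₂`: vertices `4,…,n-1` induce an all-positive complete
graph, vertices `2` and `3` are joined by positive edges to all of `4,…,n-1`
(but not to each other), vertices `0` and `1` are joined to each other by a
negative edge and to `2` and `3` by positive edges, and have no other
neighbours. -/
def Gamma2 (n : ℕ) : SignedGraph n where
  G :=
    { Adj := fun i j => i ≠ j ∧
        ((i.val ≤ 1 ∧ j.val ≤ 3) ∨ (j.val ≤ 1 ∧ i.val ≤ 3) ∨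
         (2 ≤ i.val ∧ i.val ≤ 3 ∧ 4 ≤ j.val) ∨ (2 ≤ j.val ∧ j.val ≤ 3 ∧ 4 ≤ i.val) ∨
         (4 ≤ i.val ∧ 4 ≤ j.val))
      symm := ⟨by
        intro i j h
        exact ⟨Ne.symm h.1, by tauto⟩⟩
      loopless := ⟨by intro i h; exact h.1 rfl⟩ }
  sign := fun i j =>
    if (i.val = 0 ∧ j.val = 1) ∨ (i.val = 1 ∧ j.val = 0) then -1 else 1
  sign_symm := by
    intro i j
    try dsimp only
    by_cases h : (i.val = 0 ∧ j.val = 1) ∨ (i.val = 1 ∧ j.val = 0)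
    · rw [if_pos h, if_pos (by tauto)]
    · rw [if_neg h, if_neg (by tauto)]
  sign_pm := by
    intro i j _
    try dsimp only
    by_cases h : (i.val = 0 ∧ j.val = 1) ∨ (i.val = 1 ∧ j.val = 0)
    · rw [if_pos h]; right; rfl
    · rw [if_neg h]; left; rfl


/-- The all-negative complete signed graph `(K_n, -)`. -/
def NegKn (n : ℕ) : SignedGraph n where
  G := ⊤
  sign := fun _ _ => -1
  sign_symm := fun _ _ => rfl
  sign_pm := fun _ _ _ => Or.inr rfl

/-- `Γ` is switching equivalent to `Γ'` (up to a relabelling of the vertices):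
there is a bijection of the vertices matching the underlying graphs and a
`±1`-valued switching function `s` relating the two sign functions. -/
def SwitchingEquiv {n : ℕ} (Γ Γ' : SignedGraph n) : Prop :=
  ∃ e : Fin n ≃ Fin n, ∃ s : Fin n → ℤ, (∀ i, s i = 1 ∨ s i = -1) ∧
    (∀ i j, Γ.G.Adj i j ↔ Γ'.G.Adj (e i) (e j)) ∧
    (∀ i j, Γ.G.Adj i j → Γ.sign i j = s i * Γ'.sign (e i) (e j) * s j)


namespace G1Aux

open Matrix Polynomial

noncomputable def uv : Fin 4 → ℝ := ![0,0,1,1]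
noncomputable def nv : Fin 4 → ℝ := ![0,0,0,-1]

noncomputable def B0 : Matrix (Fin 4) (Fin 4) ℝ :=
  !![0,-1,1,0; -1,0,1,0; 1,1,0,1; 0,0,1,0]

noncomputable def Bm (t : ℝ) : Matrix (Fin 4) (Fin 4) ℝ :=
  !![0,-1,1,0; -1,0,1,0; 1,1,0,1; 0,0,t+1,t]

variable (m : ℕ)

noncomputable def U : Matrix (Fin 4) (Fin m) ℝ := Matrix.of fun a _ => uv a
noncomputable def L : Matrix (Fin m) (Fin 4) ℝ := Matrix.of fun _ a => uv a
noncomputable def W : Matrix (Fin m) (Fin m) ℝ := Matrix.of fun k l => if k = l then 0 else 1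
noncomputable def N : Matrix (Fin 4) (Fin m) ℝ := Matrix.of fun a _ => nv a

lemma hLN : L m * N m = Matrix.of fun _ _ => (-1 : ℝ) := by
  ext k l
  simp [Matrix.mul_apply, Fin.sum_univ_four, L, N, uv, nv]

lemma hLNW' : L m * N m + W m = -1 := by
  rw [hLN]
  ext k l
  by_cases h : k = l <;> simp [W, Matrix.one_apply, h]

lemma hNL : N m * L m = Matrix.of fun a b => -(m:ℝ) * (nv a * nv a) * uv b := by
  ext a b
  simp only [Matrix.mul_apply, N, L, Matrix.of_apply]
  rw [Finset.sum_const]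
  simp only [Finset.card_univ, Fintype.card_fin, nsmul_eq_mul]
  fin_cases a <;> simp [nv, uv] <;> ring

lemma h11 : B0 + -(N m * L m) = Bm ((m:ℝ)) := by
  rw [hNL]
  ext a b
  fin_cases a <;> fin_cases b <;> norm_num [B0, Bm, nv, uv] <;> ring

lemma h12 : B0 * N m + U m + -(N m * (L m * N m + W m)) = 0 := by
  rw [hLNW', Matrix.mul_neg, Matrix.mul_one, neg_neg]
  ext a k
  have hB0N : (B0 * N m) a k = -(B0 a 3) := by
    simp [Matrix.mul_apply, Fin.sum_univ_four, N, nv]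
  simp only [Matrix.add_apply, hB0N, Matrix.zero_apply, U, N, Matrix.of_apply]
  fin_cases a <;> norm_num [B0, uv, nv, Matrix.vecHead, Matrix.vecTail, Matrix.cons_val_two]

lemma key1 :
    Matrix.fromBlocks 1 (-(N m)) 0 1 *
      (Matrix.fromBlocks (B0) (U m) (L m) (W m) * Matrix.fromBlocks 1 (N m) 0 1) =
    Matrix.fromBlocks (Bm ((m : ℝ))) 0 (L m) (-1) := by
  rw [Matrix.fromBlocks_multiply, Matrix.fromBlocks_multiply]
  simp only [Matrix.one_mul, Matrix.mul_one, Matrix.mul_zero, Matrix.zero_mul,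
    add_zero, zero_add, Matrix.neg_mul]
  rw [h11, h12, hLNW']

lemma charpoly_conj {n' : Type*} [DecidableEq n'] [Fintype n'] (P Q A : Matrix n' n' ℝ)
    (hQP : Q * P = 1) (hPQ : P * Q = 1) : (Q * (A * P)).charpoly = A.charpoly := by
  have hcomm : Commute (scalar n' (X : ℝ[X])) (Q.map Polynomial.C) :=
    scalar_commute _ (fun r' => Commute.all _ _) _
  have hmat : charmatrix (Q * (A * P)) =
      Q.map Polynomial.C * charmatrix A * P.map Polynomial.C := by
    unfold charmatrix
    rw [Matrix.mul_sub, Matrix.sub_mul]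
    congr 1
    · rw [← hcomm.eq, Matrix.mul_assoc, ← Matrix.map_mul, hQP,
        Matrix.map_one _ (map_zero _) (map_one _), Matrix.mul_one]
    · simp only [RingHom.mapMatrix_apply, ← Matrix.map_mul, Matrix.mul_assoc]
  unfold Matrix.charpoly
  rw [hmat, Matrix.det_mul, Matrix.det_mul, mul_comm, ← mul_assoc, ← Matrix.det_mul,
    ← Matrix.map_mul, hPQ, Matrix.map_one _ (map_zero _) (map_one _), Matrix.det_one, one_mul]

lemma charpoly_negOne : (-1 : Matrix (Fin m) (Fin m) ℝ).charpoly = (X + 1) ^ m := by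
  have h : charmatrix (-1 : Matrix (Fin m) (Fin m) ℝ) =
      Matrix.diagonal (fun _ => (X + 1 : ℝ[X])) := by
    ext i j
    by_cases h : i = j
    · subst h; rw [charmatrix_apply_eq]; simp [Matrix.one_apply]
    · rw [charmatrix_apply_ne _ _ _ h]; simp [Matrix.one_apply, h, Matrix.diagonal_apply_ne _ h]
  rw [Matrix.charpoly, h, Matrix.det_diagonal, Finset.prod_const, Finset.card_univ,
    Fintype.card_fin]

lemma eval_charpoly_Bm (t : ℝ) (ht : 0 ≤ t) : (Bm t).charpoly.eval (-1) ≠ 0 := by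
  have h : (Bm t).charpoly.eval (-1) =
      ((charmatrix (Bm t)).map (Polynomial.evalRingHom (-1 : ℝ))).det := by
    rw [Matrix.charpoly, ← Polynomial.coe_evalRingHom, RingHom.map_det, RingHom.mapMatrix_apply]
  have h2 : (charmatrix (Bm t)).map (Polynomial.evalRingHom (-1 : ℝ)) =
      !![-1,1,-1,0; 1,-1,-1,0; -1,-1,-1,-1; 0,0,-(t+1),-1-t] := by
    ext i j
    by_cases hij : i = j
    · subst hij
      rw [Matrix.map_apply, charmatrix_apply_eq]
      fin_cases i <;> simp [Bm] <;> ring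
    · rw [Matrix.map_apply, charmatrix_apply_ne _ _ _ hij]
      fin_cases i <;> fin_cases j <;> simp_all [Bm]
  rw [h, h2]
  simp [Matrix.det_succ_row_zero, Fin.sum_univ_succ, Matrix.det_fin_three, Fin.succAbove]
  nlinarith

lemma adj_entry (n : ℕ) (v w : Fin n) :
    (Gamma1 n).adjMatrix v w =
      if v.1 ≠ w.1 ∧ (2 ≤ min v.1 w.1 ∨ max v.1 w.1 ≤ 2) then
        (if (v.1 = 0 ∧ w.1 = 1) ∨ (v.1 = 1 ∧ w.1 = 0) then (-1 : ℝ) else 1) else 0 := by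
  have hadj : (Gamma1 n).G.Adj v w ↔
      (v.1 ≠ w.1 ∧ (2 ≤ min v.1 w.1 ∨ max v.1 w.1 ≤ 2)) := by
    simp [Gamma1, Fin.ext_iff]
  have hsign : ((Gamma1 n).sign v w : ℝ) =
      (if (v.1 = 0 ∧ w.1 = 1) ∨ (v.1 = 1 ∧ w.1 = 0) then (-1 : ℝ) else 1) := by
    by_cases h : (v.1 = 0 ∧ w.1 = 1) ∨ (v.1 = 1 ∧ w.1 = 0) <;>
      simp [Gamma1, h]
  simp only [SignedGraph.adjMatrix]
  by_cases h : v.1 ≠ w.1 ∧ (2 ≤ min v.1 w.1 ∨ max v.1 w.1 ≤ 2)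
  · rw [if_pos h, if_pos (hadj.mpr h), hsign]
  · rw [if_neg h, if_neg (fun hh => h (hadj.mp hh))]

lemma reindex_adj (n m : ℕ) (h4 : n = 4 + m) :
    Matrix.reindex ((finCongr h4).trans finSumFinEquiv.symm)
        ((finCongr h4).trans finSumFinEquiv.symm) (Gamma1 n).adjMatrix =
      Matrix.fromBlocks B0 (U m) (L m) (W m) := by
  set e : Fin n ≃ Fin 4 ⊕ Fin m := (finCongr h4).trans finSumFinEquiv.symm with he
  have hl : ∀ a : Fin 4, (e.symm (Sum.inl a)).val = a.val := by
    intro a; simp [he, Equiv.symm_trans_apply]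
  have hr : ∀ k : Fin m, (e.symm (Sum.inr k)).val = 4 + k.val := by
    intro k; simp [he, Equiv.symm_trans_apply]
  ext i j
  rw [Matrix.reindex_apply, Matrix.submatrix_apply, adj_entry]
  rcases i with a | k <;> rcases j with b | l
  · rw [hl, hl]
    fin_cases a <;> fin_cases b <;>
      norm_num [B0, Matrix.fromBlocks]
  · rw [hl, hr]
    fin_cases a <;>
      · simp only [Matrix.fromBlocks, Sum.elim_inl, Sum.elim_inr, U, Matrix.of_apply, uv]
        split_ifs with h1 h2 <;> norm_num <;> omega
  · rw [hr, hl]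
    fin_cases b <;>
      · simp only [Matrix.fromBlocks, Sum.elim_inl, Sum.elim_inr, L, Matrix.of_apply, uv]
        split_ifs with h1 h2 <;> norm_num <;> omega
  · rw [hr, hr]
    simp only [Matrix.fromBlocks, Sum.elim_inl, Sum.elim_inr, W, Matrix.of_apply]
    have : k = l ↔ (4 + k.1 = 4 + l.1) := by
      rw [Fin.ext_iff]; omega
    split_ifs with h1 h2 <;> simp_all <;> omega

end G1Aux

open Matrix Polynomial in
theorem Gamma1_neg_one_multiplicity (n : ℕ) (hn : 5 ≤ n) :
    Polynomial.rootMultiplicity (-1) ((Gamma1 n).adjMatrix.charpoly) = n - 4 := by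
  classical
  set m := n - 4 with hm
  have h4 : n = 4 + m := by omega
  have hre := G1Aux.reindex_adj n m h4
  have hQP : (Matrix.fromBlocks 1 (-(G1Aux.N m)) 0 1 : Matrix (Fin 4 ⊕ Fin m) (Fin 4 ⊕ Fin m) ℝ) *
      Matrix.fromBlocks 1 (G1Aux.N m) 0 1 = 1 := by
    rw [Matrix.fromBlocks_multiply]
    simp [Matrix.fromBlocks_one]
  have hPQ : (Matrix.fromBlocks 1 (G1Aux.N m) 0 1 : Matrix (Fin 4 ⊕ Fin m) (Fin 4 ⊕ Fin m) ℝ) *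
      Matrix.fromBlocks 1 (-(G1Aux.N m)) 0 1 = 1 := by
    rw [Matrix.fromBlocks_multiply]
    simp [Matrix.fromBlocks_one]
  have hc1 : (Gamma1 n).adjMatrix.charpoly =
      (Matrix.fromBlocks (G1Aux.Bm (m:ℝ)) 0 (G1Aux.L m) (-1)).charpoly := by
    rw [← Matrix.charpoly_reindex ((finCongr h4).trans finSumFinEquiv.symm), hre,
      ← G1Aux.key1 m]
    exact (G1Aux.charpoly_conj _ _ _ hQP hPQ).symm
  have hX1 : (X + 1 : ℝ[X]) = X - Polynomial.C (-1 : ℝ) := by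
    rw [Polynomial.C_neg, Polynomial.C_1, sub_neg_eq_add]
  rw [hc1, Matrix.charpoly_fromBlocks_zero₁₂, G1Aux.charpoly_negOne, hX1,
    Polynomial.rootMultiplicity_mul_X_sub_C_pow (Matrix.charpoly_monic _).ne_zero,
    Polynomial.rootMultiplicity_eq_zero
      (G1Aux.eval_charpoly_Bm (m:ℝ) (Nat.cast_nonneg m)), zero_add]
end

section
/- Let Γ be a signed graph of order n and let x be a nonnegative unit eigenvector of A(Γ) corresponding to the largest eigenvalue λ1(Γ). If x has at least two zero coordinates, then λ1(Γ) ≤ n − 3. -/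
open scoped BigOperators

theorem lambda1_le_of_two_zero_coordinates
    (n : ℕ) (Γ : SignedGraph n) (x : Fin n → ℝ)
    (hx : Γ.adjMatrix.mulVec x = Γ.lambda1 • x)
    (hnn : ∀ i, 0 ≤ x i) (hunit : ∑ i, x i ^ 2 = 1)
    (i j : Fin n) (hij : i ≠ j) (hxi : x i = 0) (hxj : x j = 0) :
    Γ.lambda1 ≤ (n : ℝ) - 3 := by
  classical
  set A := Γ.adjMatrix with hA
  set L := Γ.lambda1 with hLdef
  -- L = xᵀ A x
  have hLsum : L = ∑ k, ∑ l, x k * (A k l * x l) := by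
    have h1 : ∑ k, x k * (A.mulVec x k) = L := by
      rw [hx]
      simp only [Pi.smul_apply, smul_eq_mul]
      have : ∑ k, x k * (L * x k) = L * ∑ k, x k ^ 2 := by
        rw [Finset.mul_sum]; congr 1; ext k; ring
      rw [this, hunit, mul_one]
    rw [← h1]
    congr 1; ext k
    simp only [Matrix.mulVec, dotProduct, Finset.mul_sum]
  -- termwise bound
  have hterm : ∀ k l : Fin n, x k * (A k l * x l) ≤
      x k * x l - (if k = l then x k * x l else 0) := by
    intro k l
    by_cases hkl : k = l
    · subst hkl
      have hz : A k k = 0 := by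
        simp [hA, SignedGraph.adjMatrix]
      simp [hz]
    · rw [if_neg hkl]
      have h1 : A k l ≤ 1 := by
        simp only [hA, SignedGraph.adjMatrix]
        split
        · rcases Γ.sign_pm k l (by assumption) with h | h <;> simp [h]
        · norm_num
      have h2 : 0 ≤ x k * x l := mul_nonneg (hnn k) (hnn l)
      nlinarith
  have hbound : L ≤ (∑ k, x k) ^ 2 - 1 := by
    rw [hLsum]
    have h1 : ∑ k, ∑ l, x k * (A k l * x l) ≤
        ∑ k : Fin n, ∑ l : Fin n, (x k * x l - (if k = l then x k * x l else 0)) :=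
      Finset.sum_le_sum fun k _ => Finset.sum_le_sum fun l _ => hterm k l
    have h2 : ∑ k : Fin n, ∑ l : Fin n, (x k * x l - (if k = l then x k * x l else 0))
        = (∑ k, x k) ^ 2 - 1 := by
      have hsq : (∑ k, x k) ^ 2 = ∑ k : Fin n, ∑ l : Fin n, x k * x l := by
        rw [sq, Finset.sum_mul_sum]
      rw [hsq, ← hunit]
      rw [← Finset.sum_sub_distrib]
      congr 1; ext k
      rw [Finset.sum_sub_distrib]
      congr 1
      rw [Finset.sum_ite_eq (Finset.univ : Finset (Fin n)) k (fun l => x k * x l)]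
      simp [sq]
    linarith [h1, h2.le, h2.ge]
  -- Cauchy-Schwarz on the support
  set S : Finset (Fin n) := Finset.univ \ {i, j} with hS
  have hsum_eq : ∑ k, x k = ∑ k ∈ S, x k := by
    rw [hS, Finset.sum_sdiff_eq_sub (Finset.subset_univ _)]
    rw [Finset.sum_pair hij, hxi, hxj]
    ring
  have hcard : (S.card : ℝ) = (n : ℝ) - 2 := by
    have h2 : ({i, j} : Finset (Fin n)).card = 2 := Finset.card_pair hij
    have hle : ({i, j} : Finset (Fin n)).card ≤ (Finset.univ : Finset (Fin n)).card :=
      Finset.card_le_card (Finset.subset_univ _)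
    rw [hS, Finset.card_sdiff_of_subset (Finset.subset_univ _), h2, Finset.card_univ,
      Fintype.card_fin]
    have hn : 2 ≤ n := by rw [h2, Finset.card_univ, Fintype.card_fin] at hle; exact hle
    push_cast [Nat.cast_sub hn]
    ring
  have hCS : (∑ k ∈ S, x k) ^ 2 ≤ (S.card : ℝ) * ∑ k ∈ S, x k ^ 2 := by
    exact sq_sum_le_card_mul_sum_sq
  have hsub : ∑ k ∈ S, x k ^ 2 ≤ 1 := by
    rw [← hunit]
    exact Finset.sum_le_sum_of_subset_of_nonneg (Finset.subset_univ _)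
      (fun k _ _ => sq_nonneg _)
  have hScard_nn : (0 : ℝ) ≤ (S.card : ℝ) := Nat.cast_nonneg _
  have : (∑ k, x k) ^ 2 ≤ (n : ℝ) - 2 := by
    rw [hsum_eq]
    calc (∑ k ∈ S, x k) ^ 2 ≤ (S.card : ℝ) * ∑ k ∈ S, x k ^ 2 := hCS
      _ ≤ (S.card : ℝ) * 1 := by
          exact mul_le_mul_of_nonneg_left hsub hScard_nn
      _ = (n : ℝ) - 2 := by rw [mul_one, hcard]
  linarith
end
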